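/- (Superadditivity of uncertainty for symmetric convex games.) Let g, h : ℕ → ℝ be functions whose increments are nonnegative and nondecreasing, i.e., g(k+1) − g(k) ≥ 0 and g(k+1) − g(k) ≤ g(k+2) − g(k+1) for all k, and similarly for h. Define the symmetric convex games G(S) = g(|S|) and H(S) = h(|S|) on N players. Then for every player i, R_i(G + H) ≥ R_i(G) + R_i(H), where (G + H)(S) = G(S) + H(S). -/
import Mathlib


open Finset

noncomputable def shapleyWeight (N : ℕ) (S : Finset (Fin N)) : ℝ :=
  ((Nat.factorial S.card : ℝ) * (Nat.factorial (N - S.card - 1) : ℝ)) / (Nat.factorial N : ℝ)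

noncomputable def marginal (N : ℕ) (G : Finset (Fin N) → ℝ) (i : Fin N)
    (S : Finset (Fin N)) : ℝ :=
  G (insert i S) - G S

noncomputable def shapleyValue (N : ℕ) (G : Finset (Fin N) → ℝ) (i : Fin N) : ℝ :=
  ∑ S ∈ (Finset.univ.erase i).powerset, shapleyWeight N S * marginal N G i S

noncomputable def shapleyUncertainty (N : ℕ) (G : Finset (Fin N) → ℝ) (i : Fin N) : ℝ :=
  ∑ S ∈ (Finset.univ.erase i).powerset,
    shapleyWeight N S * (marginal N G i S - shapleyValue N G i) ^ 2

lemma inc_mono (g : ℕ → ℝ) (hgconv : ∀ k, g (k + 1) - g k ≤ g (k + 2) - g (k + 1)) :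
    ∀ a b : ℕ, a ≤ b → g (a + 1) - g a ≤ g (b + 1) - g b := by
  intro a b hab
  induction b, hab using Nat.le_induction with
  | base => exact le_refl _
  | succ n hn ih => exact ih.trans (hgconv n)

lemma cov_nonneg {α : Type*} (P : Finset α) (p f k : α → ℝ)
    (hp : ∀ S ∈ P, 0 ≤ p S) (hp1 : ∑ S ∈ P, p S = 1)
    (hmono : ∀ S ∈ P, ∀ T ∈ P, 0 ≤ (f S - f T) * (k S - k T)) :
    0 ≤ ∑ S ∈ P, p S * ((f S - ∑ T ∈ P, p T * f T) * (k S - ∑ T ∈ P, p T * k T)) := by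
  set A := ∑ T ∈ P, p T * f T with hA
  set B := ∑ T ∈ P, p T * k T with hB
  set C := ∑ T ∈ P, p T * (f T * k T) with hC
  have key : 0 ≤ ∑ S ∈ P, ∑ T ∈ P, p S * p T * ((f S - f T) * (k S - k T)) :=
    Finset.sum_nonneg fun S hS => Finset.sum_nonneg fun T hT =>
      mul_nonneg (mul_nonneg (hp S hS) (hp T hT)) (hmono S hS T hT)
  have hdouble : ∑ S ∈ P, ∑ T ∈ P, p S * p T * ((f S - f T) * (k S - k T))
      = 2 * (C - A * B) := by
    have hin : ∀ S ∈ P, ∑ T ∈ P, p S * p T * ((f S - f T) * (k S - k T))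
        = p S * (f S * k S) + p S * C - (p S * f S) * B - (p S * k S) * A := by
      intro S hS
      have : ∀ T ∈ P, p S * p T * ((f S - f T) * (k S - k T))
          = (p S * (f S * k S)) * p T + p S * (p T * (f T * k T))
            - (p S * f S) * (p T * k T) - (p S * k S) * (p T * f T) := by
        intro T _; ring
      rw [Finset.sum_congr rfl this]
      simp only [Finset.sum_sub_distrib, Finset.sum_add_distrib, ← Finset.mul_sum, hp1,
        ← hA, ← hB, ← hC]
      ring
    rw [Finset.sum_congr rfl hin]
    simp only [Finset.sum_sub_distrib, Finset.sum_add_distrib, ← Finset.sum_mul, ← hA, ← hB]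
    have h1 : ∑ S ∈ P, p S * (f S * k S) = C := rfl
    rw [h1, hp1]; ring
  have htarget : ∑ S ∈ P, p S * ((f S - A) * (k S - B)) = C - A * B := by
    have hin : ∀ S ∈ P, p S * ((f S - A) * (k S - B))
        = p S * (f S * k S) - (p S * f S) * B - (p S * k S) * A + p S * (A * B) := by
      intro S _; ring
    rw [Finset.sum_congr rfl hin]
    simp only [Finset.sum_sub_distrib, Finset.sum_add_distrib, ← Finset.sum_mul]
    rw [hp1]
    simp only [← hA, ← hB, ← hC]
    ring
  rw [htarget]; rw [hdouble] at key; linarith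

lemma weight_sum (N : ℕ) (hN : 1 ≤ N) (i : Fin N) :
    ∑ S ∈ (Finset.univ.erase i).powerset, shapleyWeight N S = 1 := by
  have hcard : (Finset.univ.erase i).card = N - 1 := by
    rw [Finset.card_erase_of_mem (Finset.mem_univ i), Finset.card_univ, Fintype.card_fin]
  have hkey := Finset.sum_powerset_apply_card
    (f := fun m => ((Nat.factorial m : ℝ) * (Nat.factorial (N - m - 1) : ℝ))
      / (Nat.factorial N : ℝ)) (x := Finset.univ.erase i)
  have hLHS : ∑ S ∈ (Finset.univ.erase i).powerset, shapleyWeight N S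
      = ∑ m ∈ Finset.range ((Finset.univ.erase i).card + 1),
          (Finset.univ.erase i).card.choose m •
            (((Nat.factorial m : ℝ) * (Nat.factorial (N - m - 1) : ℝ))
              / (Nat.factorial N : ℝ)) := hkey
  rw [hLHS, hcard]
  have hNm : N - 1 + 1 = N := Nat.succ_pred_eq_of_pos hN
  rw [hNm]
  have hterm : ∀ m ∈ Finset.range N,
      (N - 1).choose m • (((Nat.factorial m : ℝ) * (Nat.factorial (N - m - 1) : ℝ))
        / (Nat.factorial N : ℝ)) = (1 : ℝ) / N := by
    intro m hm
    rw [Finset.mem_range] at hm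
    have hmle : m ≤ N - 1 := Nat.le_pred_of_lt hm
    have hfact : (N - 1).choose m * Nat.factorial m * Nat.factorial (N - 1 - m)
        = Nat.factorial (N - 1) := Nat.choose_mul_factorial_mul_factorial hmle
    have heq : N - m - 1 = N - 1 - m := by omega
    have hNfact : (Nat.factorial N : ℝ) = N * Nat.factorial (N - 1) := by
      conv_lhs => rw [← hNm]
      rw [Nat.factorial_succ, hNm]
      push_cast
      ring
    rw [nsmul_eq_mul, heq, hNfact]
    have hfactR : ((N - 1).choose m : ℝ) * (Nat.factorial m : ℝ) * (Nat.factorial (N - 1 - m) : ℝ)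
        = (Nat.factorial (N - 1) : ℝ) := by exact_mod_cast hfact
    have hN0 : (N : ℝ) ≠ 0 := by positivity
    have hF0 : ((Nat.factorial (N - 1) : ℝ)) ≠ 0 := by positivity
    field_simp
    nlinarith [hfactR]
  rw [Finset.sum_congr rfl hterm, Finset.sum_const, Finset.card_range, nsmul_eq_mul]
  have : (N : ℝ) ≠ 0 := by positivity
  field_simp

theorem shapley_uncertainty_superadditive_symmetric_convex (N : ℕ) (hN : 1 ≤ N)
    (g h : ℕ → ℝ)
    (hg0 : ∀ k, 0 ≤ g (k + 1) - g k)
    (hgconv : ∀ k, g (k + 1) - g k ≤ g (k + 2) - g (k + 1))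
    (hh0 : ∀ k, 0 ≤ h (k + 1) - h k)
    (hhconv : ∀ k, h (k + 1) - h k ≤ h (k + 2) - h (k + 1))
    (i : Fin N) :
    shapleyUncertainty N (fun S => g S.card + h S.card) i ≥
      shapleyUncertainty N (fun S => g S.card) i +
        shapleyUncertainty N (fun S => h S.card) i := by
  classical
  set P := (Finset.univ.erase i).powerset with hP
  set p := shapleyWeight N with hp'
  set G : Finset (Fin N) → ℝ := fun S => g S.card
  set H : Finset (Fin N) → ℝ := fun S => h S.card
  set f := marginal N G i with hf
  set k := marginal N H i with hk
  have hcard_insert : ∀ S ∈ P, (insert i S).card = S.card + 1 := by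
    intro S hS
    rw [hP, Finset.mem_powerset] at hS
    have hi : i ∉ S := fun hiS => (Finset.mem_erase.mp (hS hiS)).1 rfl
    exact Finset.card_insert_of_notMem hi
  have hfS : ∀ S ∈ P, f S = g (S.card + 1) - g S.card := by
    intro S hS
    simp only [hf, marginal, G, hcard_insert S hS]
  have hkS : ∀ S ∈ P, k S = h (S.card + 1) - h S.card := by
    intro S hS
    simp only [hk, marginal, H, hcard_insert S hS]
  have hmarg_add : ∀ S, marginal N (fun S => g S.card + h S.card) i S = f S + k S := by
    intro S
    simp only [hf, hk, marginal, G, H]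
    ring
  -- Shapley value is additive
  have hVadd : shapleyValue N (fun S => g S.card + h S.card) i
      = shapleyValue N G i + shapleyValue N H i := by
    simp only [shapleyValue, ← Finset.sum_add_distrib]
    refine Finset.sum_congr rfl fun S _ => ?_
    rw [hmarg_add]
    ring
  set Vg := shapleyValue N G i with hVg
  set Vh := shapleyValue N H i with hVh
  have hVgdef : Vg = ∑ T ∈ P, p T * f T := rfl
  have hVhdef : Vh = ∑ T ∈ P, p T * k T := rfl
  have hpnn : ∀ S ∈ P, 0 ≤ p S := by
    intro S _
    unfold p
    unfold shapleyWeight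
    positivity
  have hp1 : ∑ S ∈ P, p S = 1 := weight_sum N hN i
  have hmono : ∀ S ∈ P, ∀ T ∈ P, 0 ≤ (f S - f T) * (k S - k T) := by
    intro S hS T hT
    rw [hfS S hS, hfS T hT, hkS S hS, hkS T hT]
    rcases le_total S.card T.card with hle | hle
    · have h1 := inc_mono g hgconv S.card T.card hle
      have h2 := inc_mono h hhconv S.card T.card hle
      exact mul_nonneg_iff.mpr (Or.inr ⟨by linarith, by linarith⟩)
    · have h1 := inc_mono g hgconv T.card S.card hle
      have h2 := inc_mono h hhconv T.card S.card hle
      exact mul_nonneg (by linarith) (by linarith)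
  have hcov : 0 ≤ ∑ S ∈ P, p S * ((f S - Vg) * (k S - Vh)) := by
    rw [hVgdef, hVhdef]
    exact cov_nonneg P p f k hpnn hp1 hmono
  have hexpand : shapleyUncertainty N (fun S => g S.card + h S.card) i
      = shapleyUncertainty N G i + shapleyUncertainty N H i
        + 2 * ∑ S ∈ P, p S * ((f S - Vg) * (k S - Vh)) := by
    simp only [shapleyUncertainty, hVadd, ← hVg, ← hVh, ← hP, ← hp', ← hf, ← hk]
    rw [Finset.mul_sum, ← Finset.sum_add_distrib, ← Finset.sum_add_distrib]
    refine Finset.sum_congr rfl fun S _ => ?_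
    rw [hmarg_add]
    ring
  rw [hexpand]
  linarith
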